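/- Let V satisfy hypothesis (V) and η satisfy hypothesis (η), and fix a vector of probability measures ρ̄ ∈ P(ℝ^d)^k. For r ∈ 𝒳 = L^∞([0,T], P(ℝ^d)^k), let 𝒬(r) denote the Lagrangian solution of the decoupled system ∂_t ρ^i + div(ρ^i V^i(t,x,(η^i ⋆ r_t)(x))) = 0 with initial condition ρ̄. Then there is a constant C depending only on Lip_x(V), Lip_r(V), Lip_x(η) and ‖ρ̄‖_M such that for all r, s ∈ 𝒳, sup_{t∈[0,T]} 𝒲₁(𝒬(r)_t, 𝒬(s)_t) ≤ C T e^{CT} · sup_{t∈[0,T]} 𝒲₁(r_t, s_t); in particular, for T small enough that C T e^{CT} < 1, the map 𝒬 is a contraction of (𝒳, d) with d(μ,ν) = sup_{t∈[0,T]} 𝒲₁(μ_t, ν_t). -/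

import Mathlib

open MeasureTheory
open scoped ENNReal NNReal Topology

noncomputable section

/-- `ℝ^d` with the Euclidean norm. -/
abbrev Euc (d : ℕ) : Type := EuclideanSpace ℝ (Fin d)

/-- Convolution in space of a kernel `f` with a bounded measure `μ`:
`(f * μ)(x) = ∫_{ℝ^d} f (x - y) dμ(y)`. -/
def convol {d : ℕ} (f : Euc d → ℝ) (μ : Measure (Euc d)) (x : Euc d) : ℝ :=
  ∫ y, f (x - y) ∂μ

/-- The Wasserstein distance of order one between two nonnegative Borel measures on `ℝ^d`:
the infimum of `∫ |x - y| dγ(x,y)` over all nonnegative measures `γ` on the product whose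
first marginal is `μ` and whose second marginal is `ν` (the value may be `+∞`). -/
def W1 {d : ℕ} (μ ν : Measure (Euc d)) : ℝ≥0∞ :=
  ⨅ (γ : Measure (Euc d × Euc d)) (_ : γ.map Prod.fst = μ) (_ : γ.map Prod.snd = ν),
    ∫⁻ p, (‖p.1 - p.2‖₊ : ℝ≥0∞) ∂γ

/-- Wasserstein distance of order one between vectors of measures:
`𝒲₁(ρ, σ) = Σᵢ W₁(ρ^i, σ^i)`. -/
def Wvec {d k : ℕ} (ρ σ : Fin k → Measure (Euc d)) : ℝ≥0∞ :=
  ∑ i, W1 (ρ i) (σ i)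

/-- Hypothesis (V): the vector fields `V^i : ℝ₊ × ℝ^d × ℝ^k → ℝ^d` are uniformly bounded
(by `MV`), measurable in time, and Lipschitz in `(x, r)` uniformly in time, with constant
`Lx` in `x` and `Lr` in `r ∈ ℝ^k` (with the `ℓ¹` norm). -/
def HypV {d k : ℕ} (V : Fin k → ℝ → Euc d → (Fin k → ℝ) → Euc d) (MV Lx Lr : ℝ) : Prop :=
  (∀ i t x r, ‖V i t x r‖ ≤ MV) ∧
  (∀ i x r, Measurable fun t => V i t x r) ∧
  (∀ i t x x' r r',
    ‖V i t x r - V i t x' r'‖ ≤ Lx * ‖x - x'‖ + Lr * ∑ j, |r j - r' j|)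

/-- Hypothesis (η): the convolution kernels `η^{i,j} : ℝ₊ × ℝ^d → ℝ` are uniformly bounded
(by `Mη`), measurable in time, and Lipschitz in `x` uniformly in time with constant `Lη`. -/
def HypEta {d k : ℕ} (η : Fin k → Fin k → ℝ → Euc d → ℝ) (Mη Lη : ℝ) : Prop :=
  (∀ i j t x, |η i j t x| ≤ Mη) ∧
  (∀ i j x, Measurable fun t => η i j t x) ∧
  (∀ i j t x x', |η i j t x - η i j t x'| ≤ Lη * ‖x - x'‖)

/-- `ρ ∈ L^∞(S, 𝓜⁺(ℝ^d)^k)`: a family of nonnegative bounded measures, weakly measurable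
in time and with uniformly bounded total masses on the time set `S`. -/
def IsLinftyFamily {d k : ℕ} (S : Set ℝ) (ρ : Fin k → ℝ → Measure (Euc d)) : Prop :=
  (∀ (i : Fin k) (φ : Euc d → ℝ), Continuous φ → HasCompactSupport φ →
      Measurable fun t => ∫ x, φ x ∂(ρ i t)) ∧
  ∃ M : ℝ≥0∞, M < ∞ ∧ ∀ (i : Fin k), ∀ t ∈ S, ρ i t Set.univ ≤ M

/-- The nonlocal vector field `x ↦ V^i(t, x, (η^i_t ⋆ r_t)(x))`. -/
def nonlocalField {d k : ℕ} (V : Fin k → ℝ → Euc d → (Fin k → ℝ) → Euc d)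
    (η : Fin k → Fin k → ℝ → Euc d → ℝ) (r : Fin k → ℝ → Measure (Euc d))
    (i : Fin k) (t : ℝ) (x : Euc d) : Euc d :=
  V i t x fun j => convol (η i j t) (r j t) x

/-- Weak measure solution on `[0, T]` of the system
`∂ₜ ρ^i + div (ρ^i V^i(t, x, (η^i ⋆ ρ_t)(x))) = 0`, `ρ^i(0) = ρ₀^i`: for every `i` and every
test function `φ ∈ C_c^∞((-∞, T) × ℝ^d, ℝ)`,
`∫₀^T ∫ (∂ₜφ + V^i(t,x,(η^i_t ⋆ ρ_t)(x)) · ∇φ) dρ^i_t dt + ∫ φ(0, ·) dρ₀^i = 0`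
(here `fderiv ℝ φ (t,x) (1, b) = ∂ₜφ(t,x) + b · ∇φ(t,x)`). -/
def IsWeakSol {d k : ℕ} (T : ℝ) (V : Fin k → ℝ → Euc d → (Fin k → ℝ) → Euc d)
    (η : Fin k → Fin k → ℝ → Euc d → ℝ)
    (ρ₀ : Fin k → Measure (Euc d)) (ρ : Fin k → ℝ → Measure (Euc d)) : Prop :=
  ∀ i : Fin k, ∀ φ : ℝ × Euc d → ℝ,
    ContDiff ℝ (⊤ : ℕ∞) φ → HasCompactSupport φ → (∀ p : ℝ × Euc d, T ≤ p.1 → φ p = 0) →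
    (∫ t in Set.Ioc (0 : ℝ) T,
        ∫ x, fderiv ℝ φ (t, x) (1, nonlocalField V η ρ i t x) ∂(ρ i t))
      + (∫ x, φ (0, x) ∂(ρ₀ i)) = 0

/-- Weak measure solution on `ℝ₊` of the system
`∂ₜ ρ^i + div (ρ^i V^i(t, x, (η^i ⋆ ρ_t)(x))) = 0`, `ρ^i(0) = ρ₀^i`
(test functions `φ ∈ C_c^∞(ℝ × ℝ^d, ℝ)`). -/
def IsWeakSolNN {d k : ℕ} (V : Fin k → ℝ → Euc d → (Fin k → ℝ) → Euc d)
    (η : Fin k → Fin k → ℝ → Euc d → ℝ)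
    (ρ₀ : Fin k → Measure (Euc d)) (ρ : Fin k → ℝ → Measure (Euc d)) : Prop :=
  ∀ i : Fin k, ∀ φ : ℝ × Euc d → ℝ,
    ContDiff ℝ (⊤ : ℕ∞) φ → HasCompactSupport φ →
    (∫ t in Set.Ioi (0 : ℝ),
        ∫ x, fderiv ℝ φ (t, x) (1, nonlocalField V η ρ i t x) ∂(ρ i t))
      + (∫ x, φ (0, x) ∂(ρ₀ i)) = 0

/-- `X` is a flow on the time set `S` of the (bounded, measurable in time, Lipschitz in
space) time-dependent vector field `b`: `X(0, x) = x` and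
`X(t, x) = x + ∫₀ᵗ b(s, X(s, x)) ds`, the Carathéodory formulation of the ODE
`∂ₜ X(t,x) = b(t, X(t,x))`. -/
def IsFlowOn {d : ℕ} (S : Set ℝ) (b : ℝ → Euc d → Euc d) (X : ℝ → Euc d → Euc d) : Prop :=
  (∀ x, X 0 x = x) ∧
  ∀ x, ∀ t ∈ S, X t x = x + ∫ s in (0 : ℝ)..t, b s (X s x)

/-- Lagrangian solution on the time set `S` of the system of continuity equations with
velocity fields `b^i`: for each `i`, `ρ^i_t = (X^i_t)_# ρ₀^i` where `X^i` is a flow of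
`b^i`. -/
def IsLagSolWith {d k : ℕ} (S : Set ℝ) (b : Fin k → ℝ → Euc d → Euc d)
    (ρ₀ : Fin k → Measure (Euc d)) (ρ : Fin k → ℝ → Measure (Euc d)) : Prop :=
  ∀ i : Fin k, ∃ X : ℝ → Euc d → Euc d,
    IsFlowOn S (b i) X ∧ (∀ t ∈ S, Measurable (X t)) ∧
    ∀ t ∈ S, ρ i t = (ρ₀ i).map (X t)

/-- Lagrangian solution on the time set `S` of the nonlocal system
`∂ₜ ρ^i + div (ρ^i V^i(t, x, (η^i ⋆ ρ_t)(x))) = 0`, `ρ^i(0) = ρ₀^i`. -/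
def IsLagSol {d k : ℕ} (S : Set ℝ) (V : Fin k → ℝ → Euc d → (Fin k → ℝ) → Euc d)
    (η : Fin k → Fin k → ℝ → Euc d → ℝ)
    (ρ₀ : Fin k → Measure (Euc d)) (ρ : Fin k → ℝ → Measure (Euc d)) : Prop :=
  IsLagSolWith S (nonlocalField V η ρ) ρ₀ ρ


section Aux
open intervalIntegral ProbabilityTheory

variable {d k : ℕ}

lemma W1_le_coupling {d : ℕ} {μ ν : Measure (Euc d)} (γ : Measure (Euc d × Euc d))
    (h1 : γ.map Prod.fst = μ) (h2 : γ.map Prod.snd = ν) :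
    W1 μ ν ≤ ∫⁻ p, (‖p.1 - p.2‖₊ : ℝ≥0∞) ∂γ := by
  unfold W1
  exact iInf_le_of_le γ (iInf_le_of_le h1 (iInf_le _ h2))

/-- coupling bound -/
lemma W1_le_of_maps {d : ℕ} (μ0 : Measure (Euc d)) [IsProbabilityMeasure μ0]
    (f g : Euc d → Euc d) (hf : Measurable f) (hg : Measurable g) (K : ℝ≥0∞)
    (hK : ∀ x, (‖f x - g x‖₊ : ℝ≥0∞) ≤ K) :
    W1 (μ0.map f) (μ0.map g) ≤ K := by
  have hpair : Measurable fun x => (f x, g x) := hf.prodMk hg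
  have h1 : (μ0.map fun x => (f x, g x)).map Prod.fst = μ0.map f := by
    rw [Measure.map_map measurable_fst hpair]; rfl
  have h2 : (μ0.map fun x => (f x, g x)).map Prod.snd = μ0.map g := by
    rw [Measure.map_map measurable_snd hpair]; rfl
  refine le_trans (W1_le_coupling _ h1 h2) ?_
  rw [lintegral_map ?_ hpair]
  · calc ∫⁻ x, (‖f x - g x‖₊ : ℝ≥0∞) ∂μ0 ≤ ∫⁻ _, K ∂μ0 := lintegral_mono hK
      _ = K := by simp
  · exact (measurable_fst.sub measurable_snd).nnnorm.coe_nnreal_ennreal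

lemma W1_self {d : ℕ} (μ : Measure (Euc d)) [IsProbabilityMeasure μ] : W1 μ μ = 0 := by
  refine le_antisymm ?_ zero_le
  have := W1_le_of_maps μ id id measurable_id measurable_id 0 (by simp)
  simpa [Measure.map_id] using this

/-- Integral-form Grönwall inequality, junk-value-robust. -/
lemma gronwall_int {d : ℕ} (h : ℝ → Euc d) (T L c M0 : ℝ) (hT : 0 ≤ T)
    (hL : 0 ≤ L) (hc : 0 ≤ c) (hM : 0 ≤ M0)
    (hint : IntervalIntegrable h MeasureTheory.volume 0 T)
    (hbd : ∀ u ∈ Set.Icc 0 T, ‖h u‖ ≤ M0)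
    (hrec : ∀ u ∈ Set.Icc 0 T, ‖h u‖ ≤ L * ‖∫ v in (0:ℝ)..u, h v‖ + c) :
    ∀ t ∈ Set.Icc 0 T, ‖∫ v in (0:ℝ)..t, h v‖ ≤ c * t * Real.exp (L * t) := by
  have hint' : ∀ t ∈ Set.Icc (0:ℝ) T, IntervalIntegrable h MeasureTheory.volume 0 t := by
    intro t ht
    refine hint.mono_set ?_
    rw [Set.uIcc_of_le ht.1, Set.uIcc_of_le hT]
    exact Set.Icc_subset_Icc le_rfl ht.2
  -- main induction
  have key : ∀ n : ℕ, ∀ t ∈ Set.Icc (0:ℝ) T,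
      ‖∫ v in (0:ℝ)..t, h v‖ ≤ c * t * Real.exp (L * t)
        + M0 * L ^ n * t ^ (n + 1) / (Nat.factorial (n + 1)) := by
    intro n
    induction n with
    | zero =>
      intro t ht
      have h1 : ‖∫ v in (0:ℝ)..t, h v‖ ≤ ∫ _v in (0:ℝ)..t, M0 := by
        refine le_trans (norm_integral_le_integral_norm ht.1) ?_
        refine integral_mono_on ht.1 (hint' t ht).norm (intervalIntegrable_const) ?_
        intro u hu
        exact hbd u ⟨hu.1, hu.2.trans ht.2⟩
      rw [intervalIntegral.integral_const, smul_eq_mul] at h1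
      have h2 : (0:ℝ) ≤ c * t * Real.exp (L * t) :=
        mul_nonneg (mul_nonneg hc ht.1) (Real.exp_pos _).le
      have h3 : M0 * L ^ 0 * t ^ (0+1) / ((Nat.factorial (0+1) : ℕ) : ℝ) = M0 * t := by
        norm_num
      rw [h3]
      linarith
    | succ n ih =>
      intro t ht
      set φ : ℝ → ℝ := fun u => c * u * Real.exp (L * u)
        + M0 * L ^ n * u ^ (n + 1) / (Nat.factorial (n + 1)) with hφ
      have hφcont : Continuous φ := by fun_prop
      have step1 : ‖∫ v in (0:ℝ)..t, h v‖ ≤ ∫ u in (0:ℝ)..t, (L * φ u + c) := by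
        refine le_trans (norm_integral_le_integral_norm ht.1) ?_
        refine integral_mono_on ht.1 (hint' t ht).norm
          (Continuous.intervalIntegrable (by fun_prop) _ _) ?_
        intro u hu
        have hu' : u ∈ Set.Icc (0:ℝ) T := ⟨hu.1, hu.2.trans ht.2⟩
        refine le_trans (hrec u hu') ?_
        have h3 := mul_le_mul_of_nonneg_left (ih u hu') hL
        simp only [hφ]
        linarith
      -- split the integral
      have hi1 : IntervalIntegrable (fun u => L * (c * u * Real.exp (L * u)) + c)
          MeasureTheory.volume 0 t := by
        apply Continuous.intervalIntegrable; fun_prop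
      have hi2 : IntervalIntegrable
          (fun u => L * (M0 * L ^ n * u ^ (n + 1) / (Nat.factorial (n + 1))))
          MeasureTheory.volume 0 t := by
        apply Continuous.intervalIntegrable; fun_prop
      have split : (∫ u in (0:ℝ)..t, (L * φ u + c))
          = (∫ u in (0:ℝ)..t, (L * (c * u * Real.exp (L * u)) + c))
            + ∫ u in (0:ℝ)..t, L * (M0 * L ^ n * u ^ (n + 1) / (Nat.factorial (n + 1))) := by
        rw [← integral_add hi1 hi2]
        apply integral_congr
        intro u _
        simp only [hφ]; ring
      -- first piece via FTC comparison
      have hderiv : ∀ u : ℝ, HasDerivAt (fun u => c * u * Real.exp (L * u))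
          (c * Real.exp (L * u) + c * u * (Real.exp (L * u) * L)) u := by
        intro u
        have h1 : HasDerivAt (fun u : ℝ => c * u) c u := by
          simpa using (hasDerivAt_id u).const_mul c
        have h2 : HasDerivAt (fun u : ℝ => Real.exp (L * u)) (Real.exp (L * u) * L) u := by
          have h4 : HasDerivAt (fun u : ℝ => L * u) L u := by
            simpa using (hasDerivAt_id u).const_mul L
          exact h4.exp
        exact h1.mul h2
      have piece1 : (∫ u in (0:ℝ)..t, (L * (c * u * Real.exp (L * u)) + c))
          ≤ c * t * Real.exp (L * t) := by
        have hftc : (∫ u in (0:ℝ)..t,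
            (c * Real.exp (L * u) + c * u * (Real.exp (L * u) * L)))
            = c * t * Real.exp (L * t) := by
          rw [integral_eq_sub_of_hasDerivAt (fun u _ => hderiv u)
            (by apply Continuous.intervalIntegrable; fun_prop)]
          simp
        rw [← hftc]
        refine integral_mono_on ht.1 (by apply Continuous.intervalIntegrable; fun_prop)
          (by apply Continuous.intervalIntegrable; fun_prop) ?_
        intro u hu
        have he : (1:ℝ) ≤ Real.exp (L * u) := by
          rw [← Real.exp_zero]
          exact Real.exp_le_exp.mpr (mul_nonneg hL hu.1)
        nlinarith [mul_nonneg (mul_nonneg hc hu.1) (mul_nonneg (Real.exp_pos (L*u)).le hL)]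
      -- second piece exactly
      have piece2 : (∫ u in (0:ℝ)..t, L * (M0 * L ^ n * u ^ (n + 1) / (Nat.factorial (n + 1))))
          = M0 * L ^ (n+1) * t ^ (n + 2) / (Nat.factorial (n + 2)) := by
        rw [intervalIntegral.integral_const_mul]
        have h5 : (∫ u in (0:ℝ)..t, M0 * L ^ n * u ^ (n + 1) / (Nat.factorial (n + 1)))
            = (M0 * L ^ n / (Nat.factorial (n + 1))) * ∫ u in (0:ℝ)..t, u ^ (n+1) := by
          rw [← intervalIntegral.integral_const_mul]
          apply integral_congr; intro u _; ring
        rw [h5, integral_pow]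
        have hfac : ((Nat.factorial (n + 2)) : ℝ)
            = ((n:ℝ) + 2) * (Nat.factorial (n + 1)) := by
          have h6 : Nat.factorial (n+2) = (n+2) * Nat.factorial (n+1) := rfl
          rw [h6]; push_cast; ring
        have hf1 : ((Nat.factorial (n + 1)) : ℝ) ≠ 0 := by positivity
        have hf2 : ((Nat.factorial (n + 2)) : ℝ) ≠ 0 := by positivity
        rw [hfac]
        field_simp
        push_cast
        ring
      calc ‖∫ v in (0:ℝ)..t, h v‖ ≤ _ := step1
        _ = _ + _ := split
        _ ≤ c * t * Real.exp (L * t) + M0 * L ^ (n+1) * t ^ (n + 2) / (Nat.factorial (n + 2)) := by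
            rw [piece2]; exact add_le_add_left piece1 _
  -- pass to the limit
  intro t ht
  have ht0 : (0:ℝ) ≤ t := ht.1
  have hLt : (0:ℝ) ≤ L * t := mul_nonneg hL ht0
  have htend : Filter.Tendsto (fun n : ℕ => M0 * L ^ n * t ^ (n + 1) / (Nat.factorial (n + 1)))
      Filter.atTop (nhds 0) := by
    have h1 : Filter.Tendsto (fun n : ℕ => (L * t) ^ n / (Nat.factorial n : ℝ))
        Filter.atTop (nhds 0) := FloorSemiring.tendsto_pow_div_factorial_atTop (L * t)
    have h2 : Filter.Tendsto (fun n : ℕ => M0 * t * ((L * t) ^ n / (Nat.factorial n : ℝ)))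
        Filter.atTop (nhds 0) := by
      simpa using h1.const_mul (M0 * t)
    refine squeeze_zero (fun n => ?_) (fun n => ?_) h2
    · have : (0:ℝ) ≤ M0 * L ^ n * t ^ (n+1) :=
        mul_nonneg (mul_nonneg hM (pow_nonneg hL n)) (pow_nonneg ht0 (n+1))
      positivity
    · have hnum : M0 * L ^ n * t ^ (n + 1) = M0 * t * (L * t) ^ n := by
        rw [mul_pow, pow_succ]; ring
      rw [hnum, mul_div_assoc]
      refine mul_le_mul_of_nonneg_left ?_ (mul_nonneg hM ht0)
      refine div_le_div_of_nonneg_left (pow_nonneg hLt n) ?_ ?_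
      · positivity
      · exact_mod_cast Nat.factorial_le (Nat.le_succ n)
  have hfinal : Filter.Tendsto
      (fun n : ℕ => c * t * Real.exp (L * t) + M0 * L ^ n * t ^ (n + 1) / (Nat.factorial (n + 1)))
      Filter.atTop (nhds (c * t * Real.exp (L * t))) := by
    simpa using (tendsto_const_nhds.add htend)
  exact ge_of_tendsto' hfinal (fun n => key n t ht)



lemma integrable_of_bdd_cont {μ : Measure (Euc d)} [IsProbabilityMeasure μ]
    {f : Euc d → ℝ} (hc : Continuous f) (M : ℝ) (hM : ∀ y, |f y| ≤ M) :
    Integrable f μ :=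
  ⟨hc.aestronglyMeasurable, HasFiniteIntegral.of_bounded (C := M)
    (Filter.Eventually.of_forall (fun y => by simpa using hM y))⟩

/-- Lipschitz dependence of `∫ f (z - y) dμ y` on `z`. -/
lemma conv_lip {μ : Measure (Euc d)} [IsProbabilityMeasure μ]
    {f : Euc d → ℝ} (hc : Continuous f) (M : ℝ) (hM : ∀ y, |f y| ≤ M)
    (Lf : ℝ) (hLf : ∀ y y', |f y - f y'| ≤ Lf * ‖y - y'‖) (z z' : Euc d) :
    |(∫ y, f (z - y) ∂μ) - ∫ y, f (z' - y) ∂μ| ≤ Lf * ‖z - z'‖ := by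
  have h1 : Integrable (fun y => f (z - y)) μ :=
    integrable_of_bdd_cont (hc.comp (continuous_const.sub continuous_id)) M (fun y => hM _)
  have h2 : Integrable (fun y => f (z' - y)) μ :=
    integrable_of_bdd_cont (hc.comp (continuous_const.sub continuous_id)) M (fun y => hM _)
  rw [← integral_sub h1 h2]
  rw [← Real.norm_eq_abs]
  refine le_trans (norm_integral_le_integral_norm _) ?_
  simp only [Real.norm_eq_abs]
  have h3 : (∫ y, |f (z - y) - f (z' - y)| ∂μ) ≤ ∫ _y, Lf * ‖z - z'‖ ∂μ := by
    refine integral_mono (h1.sub h2).abs (integrable_const _) ?_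
    intro y
    have := hLf (z - y) (z' - y)
    simpa [sub_sub_sub_cancel_right] using this
  simpa using h3

/-- Kantorovich-type estimate: a Lipschitz integrand sees only `W1`. -/
lemma conv_W1 {μ ν : Measure (Euc d)} [IsProbabilityMeasure μ] [IsProbabilityMeasure ν]
    {f : Euc d → ℝ} (hc : Continuous f) (M : ℝ) (hM : ∀ y, |f y| ≤ M)
    (Lf : ℝ) (hLf0 : 0 ≤ Lf) (hLf : ∀ y y', |f y - f y'| ≤ Lf * ‖y - y'‖)
    (W : ℝ≥0∞) (hW : W1 μ ν ≤ W) (hWfin : W ≠ ∞) (z : Euc d) :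
    |(∫ y, f (z - y) ∂μ) - ∫ y, f (z - y) ∂ν| ≤ Lf * W.toReal := by
  refine le_of_forall_pos_le_add ?_
  intro ε hε
  set ε0 : ℝ := ε / (Lf + 1) with hε0def
  have hε0 : 0 < ε0 := div_pos hε (by linarith)
  -- find a near-optimal coupling
  have hlt : W1 μ ν < W + ENNReal.ofReal ε0 :=
    lt_of_le_of_lt hW (ENNReal.lt_add_right hWfin
      (by simpa [ENNReal.ofReal_eq_zero] using hε0.not_ge))
  obtain ⟨γ, h1, h2, hcost⟩ : ∃ γ : Measure (Euc d × Euc d), γ.map Prod.fst = μ ∧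
      γ.map Prod.snd = ν ∧ (∫⁻ p, (‖p.1 - p.2‖₊ : ℝ≥0∞) ∂γ) < W + ENNReal.ofReal ε0 := by
    unfold W1 at hlt
    rw [iInf_lt_iff] at hlt
    obtain ⟨γ, hγ⟩ := hlt
    rw [iInf_lt_iff] at hγ
    obtain ⟨hm1, hγ⟩ := hγ
    rw [iInf_lt_iff] at hγ
    obtain ⟨hm2, hγ⟩ := hγ
    exact ⟨γ, hm1, hm2, hγ⟩
  have hγprob : IsProbabilityMeasure γ := by
    constructor
    have := congrArg (fun m : Measure (Euc d) => m Set.univ) h1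
    simpa [Measure.map_apply measurable_fst MeasurableSet.univ] using this
  -- rewrite both integrals through the coupling
  have hfc1 : Continuous fun p : Euc d × Euc d => f (z - p.1) :=
    hc.comp (continuous_const.sub continuous_fst)
  have hfc2 : Continuous fun p : Euc d × Euc d => f (z - p.2) :=
    hc.comp (continuous_const.sub continuous_snd)
  have e1 : (∫ y, f (z - y) ∂μ) = ∫ p, f (z - p.1) ∂γ := by
    rw [← h1, integral_map measurable_fst.aemeasurable]
    exact (hc.comp (continuous_const.sub continuous_id)).aestronglyMeasurable
  have e2 : (∫ y, f (z - y) ∂ν) = ∫ p, f (z - p.2) ∂γ := by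
    rw [← h2, integral_map measurable_snd.aemeasurable]
    exact (hc.comp (continuous_const.sub continuous_id)).aestronglyMeasurable
  have hint1 : Integrable (fun p : Euc d × Euc d => f (z - p.1)) γ :=
    ⟨hfc1.aestronglyMeasurable, HasFiniteIntegral.of_bounded (C := M)
      (Filter.Eventually.of_forall (fun p => by simpa using hM _))⟩
  have hint2 : Integrable (fun p : Euc d × Euc d => f (z - p.2)) γ :=
    ⟨hfc2.aestronglyMeasurable, HasFiniteIntegral.of_bounded (C := M)
      (Filter.Eventually.of_forall (fun p => by simpa using hM _))⟩
  have hcost' : (∫⁻ p, (‖p.1 - p.2‖₊ : ℝ≥0∞) ∂γ) ≠ ∞ :=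
    (hcost.trans_le le_top).ne
  have hdistint : Integrable (fun p : Euc d × Euc d => ‖p.1 - p.2‖) γ := by
    refine ⟨(continuous_fst.sub continuous_snd).norm.aestronglyMeasurable, ?_⟩
    unfold HasFiniteIntegral
    have heq : ∀ p : Euc d × Euc d, (‖(‖p.1 - p.2‖)‖₊ : ℝ≥0∞) = (‖p.1 - p.2‖₊ : ℝ≥0∞) := by
      intro p; simp [nnnorm_norm]
    simp only [heq]
    exact lt_of_le_of_lt (le_of_eq (by simp; rfl)) (lt_of_lt_of_le hcost le_top)
  have hdist_val : (∫ p, ‖p.1 - p.2‖ ∂γ) ≤ (W + ENNReal.ofReal ε0).toReal := by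
    have hnn : (0 : Euc d × Euc d → ℝ) ≤ᵐ[γ] fun p : Euc d × Euc d => ‖p.1 - p.2‖ :=
      Filter.Eventually.of_forall (fun p => norm_nonneg _)
    rw [integral_eq_lintegral_of_nonneg_ae hnn
      (continuous_fst.sub continuous_snd).norm.aestronglyMeasurable]
    have heq : (∫⁻ p, ENNReal.ofReal ‖p.1 - p.2‖ ∂γ) = ∫⁻ p, (‖p.1 - p.2‖₊ : ℝ≥0∞) ∂γ := by
      congr 1; funext p; rw [ofReal_norm_eq_enorm, enorm_eq_nnnorm]
    rw [heq]
    refine ENNReal.toReal_mono ?_ hcost.le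
    exact ENNReal.add_ne_top.mpr ⟨hWfin, ENNReal.ofReal_ne_top⟩
  -- the main chain
  have main : |(∫ y, f (z - y) ∂μ) - ∫ y, f (z - y) ∂ν| ≤ Lf * ∫ p, ‖p.1 - p.2‖ ∂γ := by
    rw [e1, e2, ← integral_sub hint1 hint2, ← Real.norm_eq_abs]
    refine le_trans (norm_integral_le_integral_norm _) ?_
    rw [← MeasureTheory.integral_const_mul]
    refine integral_mono (hint1.sub hint2).norm (hdistint.const_mul Lf) ?_
    intro p
    simp only [Real.norm_eq_abs]
    have := hLf (z - p.1) (z - p.2)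
    have heq : z - p.1 - (z - p.2) = p.2 - p.1 := by abel
    rw [heq] at this
    calc |f (z - p.1) - f (z - p.2)| ≤ Lf * ‖p.2 - p.1‖ := this
      _ = Lf * ‖p.1 - p.2‖ := by rw [norm_sub_rev]
  have htoReal : (W + ENNReal.ofReal ε0).toReal = W.toReal + ε0 := by
    rw [ENNReal.toReal_add hWfin ENNReal.ofReal_ne_top, ENNReal.toReal_ofReal hε0.le]
  calc |(∫ y, f (z - y) ∂μ) - ∫ y, f (z - y) ∂ν| ≤ Lf * ∫ p, ‖p.1 - p.2‖ ∂γ := main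
    _ ≤ Lf * (W.toReal + ε0) := by
        rw [← htoReal]; exact mul_le_mul_of_nonneg_left hdist_val hLf0
    _ = Lf * W.toReal + Lf * ε0 := by ring
    _ ≤ Lf * W.toReal + ε := by
        have : Lf * ε0 ≤ ε := by
          rw [hε0def]
          have h10 : Lf * (ε / (Lf + 1)) ≤ (Lf + 1) * (ε / (Lf + 1)) := by
            apply mul_le_mul_of_nonneg_right (by linarith) (by positivity)
          have h11 : (Lf + 1) * (ε / (Lf + 1)) = ε := by
            field_simp
          linarith
        linarith




/-- Approximating sequence for the indicator of an open set. -/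
def cutseq (U : Set (Euc d)) (n : ℕ) (y : Euc d) : ℝ :=
  min 1 (n * Metric.infDist y Uᶜ) * min 1 (max 0 ((n : ℝ) - ‖y‖))

lemma cutseq_cont (U : Set (Euc d)) (n : ℕ) : Continuous (cutseq U n) := by
  unfold cutseq
  have h1 : Continuous fun y : Euc d => Metric.infDist y Uᶜ := Metric.continuous_infDist_pt _
  fun_prop

lemma cutseq_cptsupp (U : Set (Euc d)) (n : ℕ) : HasCompactSupport (cutseq U n) := by
  refine HasCompactSupport.intro (isCompact_closedBall (0 : Euc d) n) ?_
  intro y hy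
  simp only [Metric.mem_closedBall, dist_zero_right, not_le] at hy
  unfold cutseq
  have : max 0 ((n:ℝ) - ‖y‖) = 0 := max_eq_left (by linarith)
  rw [this]
  simp

lemma cutseq_nonneg (U : Set (Euc d)) (n : ℕ) (y : Euc d) : 0 ≤ cutseq U n y := by
  unfold cutseq
  have h1 : 0 ≤ min 1 ((n:ℝ) * Metric.infDist y Uᶜ) :=
    le_min zero_le_one (mul_nonneg (Nat.cast_nonneg n) Metric.infDist_nonneg)
  have h2 : (0:ℝ) ≤ min 1 (max 0 ((n : ℝ) - ‖y‖)) := le_min zero_le_one (le_max_left _ _)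
  positivity

lemma cutseq_le_one (U : Set (Euc d)) (n : ℕ) (y : Euc d) : cutseq U n y ≤ 1 := by
  unfold cutseq
  have h1 : min 1 ((n:ℝ) * Metric.infDist y Uᶜ) ≤ 1 := min_le_left _ _
  have h0 : 0 ≤ min 1 ((n:ℝ) * Metric.infDist y Uᶜ) :=
    le_min zero_le_one (mul_nonneg (Nat.cast_nonneg n) Metric.infDist_nonneg)
  have h2 : min 1 (max 0 ((n : ℝ) - ‖y‖)) ≤ 1 := min_le_left _ _
  have h20 : (0:ℝ) ≤ min 1 (max 0 ((n : ℝ) - ‖y‖)) := le_min zero_le_one (le_max_left _ _)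
  nlinarith

lemma cutseq_mono (U : Set (Euc d)) (y : Euc d) :
    Monotone fun n => cutseq U n y := by
  intro m n hmn
  unfold cutseq
  have hd : (0:ℝ) ≤ Metric.infDist y Uᶜ := Metric.infDist_nonneg
  have hmn' : (m:ℝ) ≤ n := Nat.cast_le.mpr hmn
  refine mul_le_mul ?_ ?_ (le_min zero_le_one (le_max_left _ _)) ?_
  · exact min_le_min le_rfl (by nlinarith)
  · exact min_le_min le_rfl (max_le_max le_rfl (by linarith))
  · exact le_min zero_le_one (mul_nonneg (by positivity) hd)

lemma cutseq_sup (U : Set (Euc d)) (hU : IsOpen U) (hUne : U ≠ Set.univ) (y : Euc d) :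
    (⨆ n : ℕ, ENNReal.ofReal (cutseq U n y)) = Set.indicator U (fun _ => (1:ℝ≥0∞)) y := by
  by_cases hy : y ∈ U
  · have hne : Uᶜ.Nonempty := Set.nonempty_compl.mpr hUne
    have hpos : 0 < Metric.infDist y Uᶜ :=
      (hU.isClosed_compl.notMem_iff_infDist_pos hne).mp (by simpa using hy)
    -- choose n with n * infDist ≥ 1 and n ≥ ‖y‖ + 1
    obtain ⟨n0, hn0⟩ := exists_nat_gt (max (1 / Metric.infDist y Uᶜ) (‖y‖ + 1))
    have hn1 : 1 ≤ (n0:ℝ) * Metric.infDist y Uᶜ := by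
      have h1 : 1 / Metric.infDist y Uᶜ ≤ (n0:ℝ) := le_of_lt (lt_of_le_of_lt (le_max_left _ _) hn0)
      rw [div_le_iff₀ hpos] at h1
      linarith
    have hn2 : ‖y‖ + 1 ≤ (n0:ℝ) := le_of_lt (lt_of_le_of_lt (le_max_right _ _) hn0)
    have hval : cutseq U n0 y = 1 := by
      unfold cutseq
      rw [min_eq_left hn1, min_eq_left (le_max_of_le_right (by linarith))]
      simp
    rw [Set.indicator_of_mem hy]
    refine le_antisymm ?_ ?_
    · exact iSup_le fun n => by
        simpa using ENNReal.ofReal_le_one.mpr (cutseq_le_one U n y)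
    · refine le_trans ?_ (le_iSup _ n0)
      rw [hval]
      simp
  · have h0 : ∀ n, cutseq U n y = 0 := by
      intro n
      unfold cutseq
      have : Metric.infDist y Uᶜ = 0 := Metric.infDist_zero_of_mem (by simpa using hy)
      rw [this]
      simp
    simp [h0, Set.indicator_of_notMem hy]

/-- A weakly measurable family of probability measures is measurable as a map into
`Measure (Euc d)`. -/
lemma meas_measure (μ : ℝ → Measure (Euc d)) (hprob : ∀ t, IsProbabilityMeasure (μ t))
    (hweak : ∀ φ : Euc d → ℝ, Continuous φ → HasCompactSupport φ →
      Measurable fun t => ∫ x, φ x ∂μ t) : Measurable μ := by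
  refine Measure.measurable_of_measurable_coe μ ?_
  have hopen : ∀ U : Set (Euc d), IsOpen U → Measurable fun t => μ t U := by
    intro U hU
    by_cases hUu : U = Set.univ
    · subst hUu
      simp only [measure_univ]
      exact measurable_const
    · have key : ∀ t, μ t U = ⨆ n : ℕ, ENNReal.ofReal (∫ y, cutseq U n y ∂μ t) := by
        intro t
        have h1 : μ t U = ∫⁻ y, Set.indicator U (fun _ => (1:ℝ≥0∞)) y ∂μ t := by
          rw [lintegral_indicator hU.measurableSet]
          simp
        rw [h1]
        have h2 : ∀ y, Set.indicator U (fun _ => (1:ℝ≥0∞)) y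
            = ⨆ n : ℕ, ENNReal.ofReal (cutseq U n y) := by
          intro y; rw [cutseq_sup U hU hUu y]
        simp only [h2]
        rw [lintegral_iSup (fun n => ((cutseq_cont U n).measurable).ennreal_ofReal)
          (fun m n hmn => fun y => ENNReal.ofReal_le_ofReal (cutseq_mono U y hmn))]
        congr 1
        funext n
        rw [← ofReal_integral_eq_lintegral_ofReal
          ((cutseq_cont U n).integrable_of_hasCompactSupport (cutseq_cptsupp U n))
          (Filter.Eventually.of_forall (cutseq_nonneg U n))]
      simp only [key]
      exact Measurable.iSup fun n =>
        ((hweak _ (cutseq_cont U n) (cutseq_cptsupp U n)).ennreal_ofReal)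
  intro s hs
  refine MeasurableSpace.induction_on_inter (C := fun s _ => Measurable fun t => μ t s)
    (s := {U : Set (Euc d) | IsOpen U})
    (BorelSpace.measurable_eq (α := Euc d))
    (fun s (hs : IsOpen s) t (ht : IsOpen t) _ => hs.inter ht)
    ?_ ?_ ?_ ?_ s hs
  · simp only [measure_empty]; exact measurable_const
  · exact fun u hu => hopen u hu
  · intro u hu ihu
    have h : ∀ t, μ t uᶜ = 1 - μ t u := by
      intro t
      rw [measure_compl hu (measure_ne_top _ _), measure_univ]
    simp only [h]
    exact Measurable.const_sub ihu 1
  · intro f hdisj hmeas ihf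
    have h : ∀ t, μ t (⋃ n, f n) = ∑' n, μ t (f n) := fun t => measure_iUnion hdisj hmeas
    simp only [h]
    exact Measurable.ennreal_tsum ihf



lemma eta_cont {η : Fin k → Fin k → ℝ → Euc d → ℝ} {Mη Lη : ℝ} (hη : HypEta η Mη Lη)
    (i j : Fin k) (t : ℝ) : Continuous (η i j t) := by
  have hL : ∀ x x', dist (η i j t x) (η i j t x') ≤ (max Lη 0) * dist x x' := by
    intro x x'
    rw [Real.dist_eq, dist_eq_norm]
    calc |η i j t x - η i j t x'| ≤ Lη * ‖x - x'‖ := hη.2.2 i j t x x'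
      _ ≤ (max Lη 0) * ‖x - x'‖ :=
        mul_le_mul_of_nonneg_right (le_max_left _ _) (norm_nonneg _)
  exact (LipschitzWith.of_dist_le_mul (K := (max Lη 0).toNNReal) (by
    intro x x'
    refine le_trans (hL x x') ?_
    rw [Real.coe_toNNReal _ (le_max_right _ _)])).continuous

lemma V_cont {V : Fin k → ℝ → Euc d → (Fin k → ℝ) → Euc d} {MV Lx Lr : ℝ}
    (hV : HypV V MV Lx Lr) (i : Fin k) (t : ℝ) :
    Continuous fun p : Euc d × (Fin k → ℝ) => V i t p.1 p.2 := by
  set K : ℝ := max Lx 0 + max Lr 0 * k with hK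
  have hK0 : 0 ≤ K := by positivity
  refine (LipschitzWith.of_dist_le_mul (K := K.toNNReal) ?_).continuous
  intro p q
  rw [Real.coe_toNNReal _ hK0, dist_eq_norm]
  calc ‖V i t p.1 p.2 - V i t q.1 q.2‖
      ≤ Lx * ‖p.1 - q.1‖ + Lr * ∑ j, |p.2 j - q.2 j| := hV.2.2 i t p.1 q.1 p.2 q.2
    _ ≤ max Lx 0 * dist p q + max Lr 0 * (k * dist p q) := by
        have h1 : ‖p.1 - q.1‖ ≤ dist p q := by
          rw [← dist_eq_norm]
          exact le_trans (le_max_left _ _) (le_of_eq (Prod.dist_eq).symm)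
        have h2 : (∑ j, |p.2 j - q.2 j|) ≤ k * dist p q := by
          have hj : ∀ j, |p.2 j - q.2 j| ≤ dist p q := by
            intro j
            rw [← Real.dist_eq]
            exact le_trans (dist_le_pi_dist p.2 q.2 j)
              (le_trans (le_max_right (dist p.1 q.1) _) (le_of_eq (Prod.dist_eq).symm))
          calc (∑ j, |p.2 j - q.2 j|) ≤ ∑ _j : Fin k, dist p q :=
                Finset.sum_le_sum fun j _ => hj j
            _ = k * dist p q := by simp [mul_comm]
        have hLx : Lx * ‖p.1 - q.1‖ ≤ max Lx 0 * dist p q := by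
          refine le_trans (mul_le_mul_of_nonneg_right (le_max_left Lx 0) (norm_nonneg _)) ?_
          exact mul_le_mul_of_nonneg_left h1 (le_max_right _ _)
        have hLr : Lr * ∑ j, |p.2 j - q.2 j| ≤ max Lr 0 * (k * dist p q) := by
          have hsum : (0:ℝ) ≤ ∑ j, |p.2 j - q.2 j| :=
            Finset.sum_nonneg fun j _ => abs_nonneg _
          refine le_trans (mul_le_mul_of_nonneg_right (le_max_left Lr 0) hsum) ?_
          exact mul_le_mul_of_nonneg_left h2 (le_max_right _ _)
        linarith
    _ = K * dist p q := by rw [hK]; ring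

/-- Joint measurability of the nonlocal field built from a measurable family of
probability measures. -/
lemma nonlocalField_jointly_measurable
    {V : Fin k → ℝ → Euc d → (Fin k → ℝ) → Euc d} {MV Lx Lr : ℝ} (hV : HypV V MV Lx Lr)
    {η : Fin k → Fin k → ℝ → Euc d → ℝ} {Mη Lη : ℝ} (hη : HypEta η Mη Lη)
    (r : Fin k → ℝ → Measure (Euc d)) (hprob : ∀ j t, IsProbabilityMeasure (r j t))
    (hmeas : ∀ j, Measurable (r j)) (i : Fin k) :
    Measurable (Function.uncurry (nonlocalField V η r i)) := by
  -- joint measurability of η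
  have hηu : ∀ j, Measurable fun q : ℝ × Euc d => η i j q.1 q.2 := by
    intro j
    have h1 : Measurable (Function.uncurry fun (x : Euc d) (t : ℝ) => η i j t x) :=
      measurable_uncurry_of_continuous_of_measurable
        (fun t => eta_cont hη i j t) (fun x => hη.2.1 i j x)
    have h2 : (fun q : ℝ × Euc d => η i j q.1 q.2)
        = (Function.uncurry fun (x : Euc d) (t : ℝ) => η i j t x) ∘ Prod.swap := rfl
    rw [h2]
    exact h1.comp measurable_swap
  -- joint measurability of V
  have hVu : Measurable fun q : ℝ × (Euc d × (Fin k → ℝ)) => V i q.1 q.2.1 q.2.2 := by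
    have h1 : Measurable (Function.uncurry
        fun (p : Euc d × (Fin k → ℝ)) (t : ℝ) => V i t p.1 p.2) :=
      measurable_uncurry_of_continuous_of_measurable
        (fun t => V_cont hV i t) (fun p => hV.2.1 i p.1 p.2)
    have h2 : (fun q : ℝ × (Euc d × (Fin k → ℝ)) => V i q.1 q.2.1 q.2.2)
        = (Function.uncurry fun (p : Euc d × (Fin k → ℝ)) (t : ℝ) => V i t p.1 p.2)
          ∘ Prod.swap := rfl
    rw [h2]
    exact h1.comp measurable_swap
  -- the convolution terms are jointly measurable
  have hconv : ∀ j : Fin k,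
      Measurable fun q : ℝ × Euc d => convol (η i j q.1) (r j q.1) q.2 := by
    intro j
    let κ0 : Kernel ℝ (Euc d) := ⟨r j, hmeas j⟩
    haveI : IsMarkovKernel κ0 := ⟨fun t => hprob j t⟩
    let κ : Kernel (ℝ × Euc d) (Euc d) := κ0.comap Prod.fst measurable_fst
    haveI : IsMarkovKernel κ := by
      constructor
      intro q
      rw [Kernel.comap_apply]
      exact hprob j q.1
    have hf : StronglyMeasurable fun p : (ℝ × Euc d) × Euc d => η i j p.1.1 (p.1.2 - p.2) := by
      refine Measurable.stronglyMeasurable ?_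
      exact (hηu j).comp ((measurable_fst.comp measurable_fst).prodMk
        ((measurable_snd.comp measurable_fst).sub measurable_snd))
    have h3 := hf.integral_kernel_prod_right' (κ := κ)
    have h4 : (fun q : ℝ × Euc d => convol (η i j q.1) (r j q.1) q.2)
        = fun q : ℝ × Euc d => ∫ y, η i j q.1 (q.2 - y) ∂κ q := by
      funext q
      rw [Kernel.comap_apply]
      rfl
    rw [h4]
    exact h3.measurable
  -- assemble
  have heq : Function.uncurry (nonlocalField V η r i)
      = fun q : ℝ × Euc d =>
        V i q.1 q.2 (fun j => convol (η i j q.1) (r j q.1) q.2) := rfl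
  rw [heq]
  have h5 : Measurable fun q : ℝ × Euc d =>
      (q.1, (q.2, fun j => convol (η i j q.1) (r j q.1) q.2)) := by
    refine measurable_fst.prodMk (measurable_snd.prodMk ?_)
    exact measurable_pi_lambda _ fun j => hconv j
  exact hVu.comp h5

/-- Bootstrap: along any Carathéodory flow of a bounded field that agrees on `[0,T]` with a
jointly measurable field, the composed velocity is interval integrable. -/
lemma flow_integrable {d : ℕ} {T : ℝ} (hT : 0 ≤ T)
    (b b' : ℝ → Euc d → Euc d) (hb' : Measurable (Function.uncurry b'))
    (heq : ∀ u ∈ Set.Icc (0:ℝ) T, ∀ y, b u y = b' u y)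
    (MV : ℝ) (hbd : ∀ u y, ‖b u y‖ ≤ MV)
    (Z : ℝ → Euc d) (hZ : ∀ t ∈ Set.Icc (0:ℝ) T, Z t = Z 0 + ∫ u in (0:ℝ)..t, b u (Z u)) :
    IntervalIntegrable (fun u => b u (Z u)) MeasureTheory.volume 0 T := by
  set g : ℝ → Euc d := fun u => b u (Z u) with hg
  set P : ℝ → Euc d := fun t => ∫ u in (0:ℝ)..t, g u with hP
  set A : Set ℝ := {t | t ∈ Set.Icc (0:ℝ) T ∧ IntervalIntegrable g MeasureTheory.volume 0 t}
    with hA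
  have hAsub : A ⊆ Set.Icc 0 T := fun t ht => ht.1
  have hAord : A.OrdConnected := by
    constructor
    intro t1 ht1 t2 ht2 z hz
    have hz1 : t1 ≤ z := hz.1
    have hz2 : z ≤ t2 := hz.2
    have h01 : (0:ℝ) ≤ t1 := ht1.1.1
    have h0z : (0:ℝ) ≤ z := le_trans h01 hz1
    have hzT : z ≤ T := le_trans hz2 ht2.1.2
    refine ⟨⟨h0z, hzT⟩, ?_⟩
    refine ht2.2.mono_set ?_
    rw [Set.uIcc_of_le h0z, Set.uIcc_of_le ht2.1.1]
    exact Set.Icc_subset_Icc le_rfl hz2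
  have hAmeas : MeasurableSet A := hAord.measurableSet
  -- P is Lipschitz on A
  have hPlip : ∀ t1 ∈ A, ∀ t2 ∈ A, ‖P t1 - P t2‖ ≤ MV * |t1 - t2| := by
    have key : ∀ t1 ∈ A, ∀ t2 ∈ A, t2 ≤ t1 → ‖P t1 - P t2‖ ≤ MV * |t1 - t2| := by
      intro t1 ht1 t2 ht2 hle
      have hsub : P t1 - P t2 = ∫ u in t2..t1, g u :=
        integral_interval_sub_left ht1.2 ht2.2
      rw [hsub]
      refine le_trans (norm_integral_le_of_norm_le_const fun u _ => hbd u (Z u)) ?_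
      rw [abs_sub_comm]
    intro t1 ht1 t2 ht2
    rcases le_total t2 t1 with hle | hle
    · exact key t1 ht1 t2 ht2 hle
    · rw [norm_sub_rev, abs_sub_comm]
      exact key t2 ht2 t1 ht1 hle
  have hPcont : ContinuousOn P A := by
    refine LipschitzOnWith.continuousOn (K := (max MV 0).toNNReal) ?_
    refine LipschitzOnWith.of_dist_le_mul ?_
    intro t1 ht1 t2 ht2
    rw [dist_eq_norm, Real.coe_toNNReal _ (le_max_right _ _), Real.dist_eq]
    refine le_trans (hPlip t1 ht1 t2 ht2) ?_
    exact mul_le_mul_of_nonneg_right (le_max_left _ _) (abs_nonneg _)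
  -- Z is a.e. measurable on [0,T]
  have hPmeasA : AEMeasurable P (MeasureTheory.volume.restrict A) :=
    hPcont.aemeasurable hAmeas
  have hPzero : ∀ t ∈ Set.Icc (0:ℝ) T \ A, P t = 0 := by
    intro t ht
    have : ¬ IntervalIntegrable g MeasureTheory.volume 0 t := by
      intro hcon
      exact ht.2 ⟨ht.1, hcon⟩
    simp only [hP]
    exact integral_undef (by simpa [intervalIntegrable_iff] using this)
  have hPmeas : AEMeasurable P (MeasureTheory.volume.restrict (Set.Icc 0 T)) := by
    have hsplit : Set.Icc (0:ℝ) T = A ∪ (Set.Icc (0:ℝ) T \ A) :=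
      (Set.union_diff_cancel hAsub).symm
    rw [hsplit, aemeasurable_union_iff]
    constructor
    · exact hPmeasA
    · refine aemeasurable_const (b := (0 : Euc d)) |>.congr ?_
      rw [Filter.EventuallyEq, ae_restrict_iff' (measurableSet_Icc.diff hAmeas)]
      exact Filter.Eventually.of_forall fun t ht => (hPzero t ht).symm
  have hZmeas : AEMeasurable Z (MeasureTheory.volume.restrict (Set.Icc 0 T)) := by
    have hze : ∀ᵐ t ∂(MeasureTheory.volume.restrict (Set.Icc (0:ℝ) T)),
        Z t = Z 0 + P t := by
      rw [ae_restrict_iff' measurableSet_Icc]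
      exact Filter.Eventually.of_forall fun t ht => hZ t ht
    exact (aemeasurable_const.add hPmeas).congr (Filter.EventuallyEq.symm hze)
  -- hence g is a.e. measurable and bounded, so integrable
  have hgmeas : AEMeasurable g (MeasureTheory.volume.restrict (Set.Icc 0 T)) := by
    have h1 : AEMeasurable (fun u => b' u (Z u))
        (MeasureTheory.volume.restrict (Set.Icc 0 T)) :=
      hb'.comp_aemeasurable (aemeasurable_id.prodMk hZmeas)
    refine h1.congr ?_
    rw [Filter.EventuallyEq, ae_restrict_iff' measurableSet_Icc]
    exact Filter.Eventually.of_forall fun u hu => (heq u hu (Z u)).symm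
  have hgint : IntegrableOn g (Set.Icc 0 T) MeasureTheory.volume := by
    haveI : IsFiniteMeasure (MeasureTheory.volume.restrict (Set.Icc (0:ℝ) T)) := by
      constructor
      rw [Measure.restrict_apply_univ]
      exact measure_Icc_lt_top
    exact ⟨hgmeas.aestronglyMeasurable,
      HasFiniteIntegral.of_bounded (C := MV)
        (Filter.Eventually.of_forall fun u => hbd u (Z u))⟩
  rw [intervalIntegrable_iff_integrableOn_Icc_of_le hT]
  exact hgint

end Aux

/-- (Contraction property of the fixed-point map `𝒬`.) There is a
constant `C`, depending only on `k = ‖ρ₀‖_𝓜`, `Lip_x(V)`, `Lip_r(V)` and `Lip_x(η)`, such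
that if `ρ = 𝒬(r)` and `σ = 𝒬(s)` are the Lagrangian solutions of the decoupled systems
`∂ₜ ρ^i + div (ρ^i V^i(t,x,(η^i ⋆ r_t)(x))) = 0` and
`∂ₜ σ^i + div (σ^i V^i(t,x,(η^i ⋆ s_t)(x))) = 0`, both with initial condition `ρ₀`, then
`sup_{t ∈ [0,T]} 𝒲₁(ρ_t, σ_t) ≤ C T e^{CT} sup_{t ∈ [0,T]} 𝒲₁(r_t, s_t)`;
in particular `𝒬` is a contraction for `T` small enough with `C T e^{CT} < 1`. -/
theorem fixed_point_map_contraction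
    (k : ℕ) (Lx Lr Lη : ℝ) :
    ∃ C : ℝ, 0 ≤ C ∧
      ∀ (d : ℕ) (T : ℝ), 0 ≤ T →
      ∀ (V : Fin k → ℝ → Euc d → (Fin k → ℝ) → Euc d)
        (η : Fin k → Fin k → ℝ → Euc d → ℝ) (MV Mη : ℝ),
        HypV V MV Lx Lr → HypEta η Mη Lη →
      ∀ (ρ₀ : Fin k → Measure (Euc d)), (∀ i, IsProbabilityMeasure (ρ₀ i)) →
      ∀ (r s ρ σ : Fin k → ℝ → Measure (Euc d)),
        IsLinftyFamily (Set.Icc 0 T) r → IsLinftyFamily (Set.Icc 0 T) s →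
        (∀ i, ∀ t ∈ Set.Icc (0 : ℝ) T, IsProbabilityMeasure (r i t)) →
        (∀ i, ∀ t ∈ Set.Icc (0 : ℝ) T, IsProbabilityMeasure (s i t)) →
        IsLagSolWith (Set.Icc 0 T) (nonlocalField V η r) ρ₀ ρ →
        IsLagSolWith (Set.Icc 0 T) (nonlocalField V η s) ρ₀ σ →
        (⨆ t ∈ Set.Icc (0 : ℝ) T, Wvec (fun i => ρ i t) (fun i => σ i t))
          ≤ ENNReal.ofReal (C * T * Real.exp (C * T)) *
              ⨆ t ∈ Set.Icc (0 : ℝ) T, Wvec (fun i => r i t) (fun i => s i t) := by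
  classical
  set Lxp : ℝ := max Lx 0 with hLxp
  set Lrp : ℝ := max Lr 0 with hLrp
  set Lηp : ℝ := max Lη 0 with hLηp
  have hLxp0 : 0 ≤ Lxp := le_max_right _ _
  have hLrp0 : 0 ≤ Lrp := le_max_right _ _
  have hLηp0 : 0 ≤ Lηp := le_max_right _ _
  set L : ℝ := Lxp + Lrp * k * Lηp with hLdef
  have hL0 : 0 ≤ L := by positivity
  set c' : ℝ := Lrp * (k * Lηp) with hc'def
  have hc'0 : 0 ≤ c' := by positivity
  have hkc'0 : 0 ≤ (k:ℝ) * c' := by positivity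
  refine ⟨1 + L + k * c', by linarith, ?_⟩
  set C : ℝ := 1 + L + k * c' with hCdef
  have hC1 : 1 ≤ C := by linarith
  intro d T hT V η MV Mη hV hη ρ₀ hρ₀ r s ρ σ hrL hsL hrprob hsprob hρ hσ
  set SW : ℝ≥0∞ := ⨆ t ∈ Set.Icc (0:ℝ) T, Wvec (fun i => r i t) (fun i => s i t) with hSWdef
  refine iSup₂_le fun t ht => ?_
  by_cases hT0 : T = 0
  · -- at time 0 both solutions equal the initial condition
    subst hT0
    have ht0 : t = 0 := le_antisymm ht.2 ht.1
    subst ht0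
    have hmem : (0:ℝ) ∈ Set.Icc (0:ℝ) 0 := ⟨le_rfl, le_rfl⟩
    have hzero : ∀ i, W1 (ρ i 0) (σ i 0) = 0 := by
      intro i
      obtain ⟨X, hXf, hXm, hXrep⟩ := hρ i
      obtain ⟨Y, hYf, hYm, hYrep⟩ := hσ i
      haveI := hρ₀ i
      have hX0 : X 0 = id := funext fun x => hXf.1 x
      have hY0 : Y 0 = id := funext fun x => hYf.1 x
      rw [hXrep 0 hmem, hYrep 0 hmem, hX0, hY0, Measure.map_id]
      exact W1_self _
    have : Wvec (fun i => ρ i 0) (fun i => σ i 0) = 0 := by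
      unfold Wvec
      exact Finset.sum_eq_zero fun i _ => hzero i
    rw [this]
    exact zero_le
  have hTpos : 0 < T := lt_of_le_of_ne hT (Ne.symm hT0)
  by_cases hSW : SW = ⊤
  · -- the right-hand side is infinite
    have hCpos : 0 < C * T * Real.exp (C * T) := by positivity
    rw [hSW, ENNReal.mul_top (by simpa [ENNReal.ofReal_eq_zero] using hCpos.not_ge)]
    exact le_top
  -- main case
  set SWr : ℝ := SW.toReal with hSWrdef
  have hSWr0 : 0 ≤ SWr := ENNReal.toReal_nonneg
  set cc : ℝ := c' * SWr with hccdef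
  have hcc0 : 0 ≤ cc := by positivity
  have hW1SW : ∀ j : Fin k, ∀ u ∈ Set.Icc (0:ℝ) T, W1 (r j u) (s j u) ≤ SW := by
    intro j u hu
    refine le_trans ?_ (le_biSup _ hu)
    exact Finset.single_le_sum (f := fun i => W1 (r i u) (s i u))
      (fun i _ => zero_le) (Finset.mem_univ j)
  -- the modified (everywhere-probability) families
  set r' : Fin k → ℝ → Measure (Euc d) :=
    fun j u => if u ∈ Set.Icc (0:ℝ) T then r j u else r j 0 with hr'def
  set s' : Fin k → ℝ → Measure (Euc d) :=
    fun j u => if u ∈ Set.Icc (0:ℝ) T then s j u else s j 0 with hs'def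
  have h0mem : (0:ℝ) ∈ Set.Icc (0:ℝ) T := ⟨le_rfl, hT⟩
  have hr'prob : ∀ j u, IsProbabilityMeasure (r' j u) := by
    intro j u
    simp only [hr'def]
    split_ifs with h
    · exact hrprob j u h
    · exact hrprob j 0 h0mem
  have hs'prob : ∀ j u, IsProbabilityMeasure (s' j u) := by
    intro j u
    simp only [hs'def]
    split_ifs with h
    · exact hsprob j u h
    · exact hsprob j 0 h0mem
  have hr'meas : ∀ j, Measurable (r' j) := by
    intro j
    refine meas_measure _ (hr'prob j) ?_
    intro φ hφc hφs
    have : (fun u => ∫ x, φ x ∂r' j u)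
        = fun u => if u ∈ Set.Icc (0:ℝ) T then (∫ x, φ x ∂r j u) else ∫ x, φ x ∂r j 0 := by
      funext u
      simp only [hr'def]
      split_ifs <;> rfl
    rw [this]
    exact Measurable.ite measurableSet_Icc (hrL.1 j φ hφc hφs) measurable_const
  have hs'meas : ∀ j, Measurable (s' j) := by
    intro j
    refine meas_measure _ (hs'prob j) ?_
    intro φ hφc hφs
    have : (fun u => ∫ x, φ x ∂s' j u)
        = fun u => if u ∈ Set.Icc (0:ℝ) T then (∫ x, φ x ∂s j u) else ∫ x, φ x ∂s j 0 := by
      funext u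
      simp only [hs'def]
      split_ifs <;> rfl
    rw [this]
    exact Measurable.ite measurableSet_Icc (hsL.1 j φ hφc hφs) measurable_const
  -- per-component estimate
  have hi : ∀ i : Fin k, W1 (ρ i t) (σ i t) ≤ ENNReal.ofReal (cc * T * Real.exp (L * T)) := by
    intro i
    obtain ⟨X, hXf, hXm, hXrep⟩ := hρ i
    obtain ⟨Y, hYf, hYm, hYrep⟩ := hσ i
    haveI := hρ₀ i
    have hbr' : Measurable (Function.uncurry (nonlocalField V η r' i)) :=
      nonlocalField_jointly_measurable hV hη r' (fun j u => hr'prob j u) hr'meas i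
    have hbs' : Measurable (Function.uncurry (nonlocalField V η s' i)) :=
      nonlocalField_jointly_measurable hV hη s' (fun j u => hs'prob j u) hs'meas i
    have heqr : ∀ u ∈ Set.Icc (0:ℝ) T, ∀ y,
        nonlocalField V η r i u y = nonlocalField V η r' i u y := by
      intro u hu y
      unfold nonlocalField
      congr 1
      funext j
      simp only [hr'def, if_pos hu]
    have heqs : ∀ u ∈ Set.Icc (0:ℝ) T, ∀ y,
        nonlocalField V η s i u y = nonlocalField V η s' i u y := by
      intro u hu y
      unfold nonlocalField
      congr 1
      funext j
      simp only [hs'def, if_pos hu]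
    have hbdV : ∀ (rr : Fin k → ℝ → Measure (Euc d)) u y,
        ‖nonlocalField V η rr i u y‖ ≤ MV := fun rr u y => hV.1 i u y _
    -- pointwise flow comparison
    have hpt : ∀ x : Euc d, ‖X t x - Y t x‖ ≤ cc * T * Real.exp (L * T) := by
      intro x
      have hintX : IntervalIntegrable (fun u => nonlocalField V η r i u (X u x))
          MeasureTheory.volume 0 T := by
        refine flow_integrable hT _ _ hbr' heqr MV (hbdV r) (fun u => X u x) ?_
        intro u hu
        show X u x = X 0 x + ∫ v in (0:ℝ)..u, nonlocalField V η r i v (X v x)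
        rw [hXf.1 x]
        exact hXf.2 x u hu
      have hintY : IntervalIntegrable (fun u => nonlocalField V η s i u (Y u x))
          MeasureTheory.volume 0 T := by
        refine flow_integrable hT _ _ hbs' heqs MV (hbdV s) (fun u => Y u x) ?_
        intro u hu
        show Y u x = Y 0 x + ∫ v in (0:ℝ)..u, nonlocalField V η s i v (Y v x)
        rw [hYf.1 x]
        exact hYf.2 x u hu
      set h : ℝ → Euc d := fun u => nonlocalField V η r i u (X u x)
        - nonlocalField V η s i u (Y u x) with hhdef
      have hinth : IntervalIntegrable h MeasureTheory.volume 0 T := hintX.sub hintY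
      have hid : ∀ u ∈ Set.Icc (0:ℝ) T, X u x - Y u x = ∫ v in (0:ℝ)..u, h v := by
        intro u hu
        have hmono : ∀ (f : ℝ → Euc d), IntervalIntegrable f MeasureTheory.volume 0 T →
            IntervalIntegrable f MeasureTheory.volume 0 u := by
          intro f hf
          refine hf.mono_set ?_
          rw [Set.uIcc_of_le hu.1, Set.uIcc_of_le hT]
          exact Set.Icc_subset_Icc le_rfl hu.2
        rw [hhdef, intervalIntegral.integral_sub (hmono _ hintX) (hmono _ hintY)]
        rw [hXf.2 x u hu, hYf.2 x u hu]
        abel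
      have hbdh : ∀ u ∈ Set.Icc (0:ℝ) T, ‖h u‖ ≤ MV + MV := by
        intro u hu
        exact le_trans (norm_sub_le _ _) (add_le_add (hbdV r u _) (hbdV s u _))
      have hMV0 : 0 ≤ MV := le_trans (norm_nonneg _) (hbdV r 0 x)
      have hrec : ∀ u ∈ Set.Icc (0:ℝ) T, ‖h u‖ ≤ L * ‖∫ v in (0:ℝ)..u, h v‖ + cc := by
        intro u hu
        rw [← hid u hu]
        haveI := hrprob i u hu
        -- Lipschitz + Kantorovich estimates on the convolution terms
        have hcv : ∀ j : Fin k,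
            |convol (η i j u) (r j u) (X u x) - convol (η i j u) (s j u) (Y u x)|
              ≤ Lηp * ‖X u x - Y u x‖ + Lηp * SWr := by
          intro j
          haveI := hrprob j u hu
          haveI := hsprob j u hu
          have hηM : ∀ y, |η i j u y| ≤ Mη := fun y => hη.1 i j u y
          have hηL : ∀ y y', |η i j u y - η i j u y'| ≤ Lηp * ‖y - y'‖ := by
            intro y y'
            refine le_trans (hη.2.2 i j u y y') ?_
            exact mul_le_mul_of_nonneg_right (le_max_left _ _) (norm_nonneg _)
          have h1 : |convol (η i j u) (r j u) (X u x) - convol (η i j u) (r j u) (Y u x)|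
              ≤ Lηp * ‖X u x - Y u x‖ :=
            conv_lip (eta_cont hη i j u) Mη hηM Lηp hηL (X u x) (Y u x)
          have h2 : |convol (η i j u) (r j u) (Y u x) - convol (η i j u) (s j u) (Y u x)|
              ≤ Lηp * SWr := by
            have := conv_W1 (μ := r j u) (ν := s j u) (eta_cont hη i j u) Mη hηM Lηp hLηp0
              hηL SW (hW1SW j u hu) hSW (Y u x)
            exact this
          calc |convol (η i j u) (r j u) (X u x) - convol (η i j u) (s j u) (Y u x)|
              ≤ |convol (η i j u) (r j u) (X u x) - convol (η i j u) (r j u) (Y u x)|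
                + |convol (η i j u) (r j u) (Y u x) - convol (η i j u) (s j u) (Y u x)| := by
                have := abs_sub_abs_le_abs_sub (convol (η i j u) (r j u) (X u x))
                  (convol (η i j u) (s j u) (Y u x))
                exact abs_sub_le _ _ _
            _ ≤ Lηp * ‖X u x - Y u x‖ + Lηp * SWr := add_le_add h1 h2
        have hVlip : ‖h u‖ ≤ Lx * ‖X u x - Y u x‖
            + Lr * ∑ j, |convol (η i j u) (r j u) (X u x)
              - convol (η i j u) (s j u) (Y u x)| := by
          rw [hhdef]
          exact hV.2.2 i u (X u x) (Y u x) _ _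
        have hsum0 : (0:ℝ) ≤ ∑ j, |convol (η i j u) (r j u) (X u x)
            - convol (η i j u) (s j u) (Y u x)| :=
          Finset.sum_nonneg fun j _ => abs_nonneg _
        have hsum : (∑ j, |convol (η i j u) (r j u) (X u x)
            - convol (η i j u) (s j u) (Y u x)|)
            ≤ k * (Lηp * ‖X u x - Y u x‖ + Lηp * SWr) := by
          calc (∑ j, |convol (η i j u) (r j u) (X u x) - convol (η i j u) (s j u) (Y u x)|)
              ≤ ∑ _j : Fin k, (Lηp * ‖X u x - Y u x‖ + Lηp * SWr) :=
                Finset.sum_le_sum fun j _ => hcv j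
            _ = k * (Lηp * ‖X u x - Y u x‖ + Lηp * SWr) := by
                rw [Finset.sum_const, Finset.card_univ, Fintype.card_fin, nsmul_eq_mul]
        have hx1 : Lx * ‖X u x - Y u x‖ ≤ Lxp * ‖X u x - Y u x‖ :=
          mul_le_mul_of_nonneg_right (le_max_left _ _) (norm_nonneg _)
        have hx2 : Lr * ∑ j, |convol (η i j u) (r j u) (X u x)
            - convol (η i j u) (s j u) (Y u x)|
            ≤ Lrp * (k * (Lηp * ‖X u x - Y u x‖ + Lηp * SWr)) := by
          refine le_trans (mul_le_mul_of_nonneg_right (le_max_left Lr 0) hsum0) ?_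
          exact mul_le_mul_of_nonneg_left hsum hLrp0
        have hfin : Lxp * ‖X u x - Y u x‖ + Lrp * (k * (Lηp * ‖X u x - Y u x‖ + Lηp * SWr))
            = L * ‖X u x - Y u x‖ + cc := by
          rw [hLdef, hccdef, hc'def]
          ring
        linarith [hVlip, hx1, hx2]
      have hgron := gronwall_int h T L cc (MV + MV) hT hL0 hcc0 (by linarith)
        hinth hbdh hrec t ht
      rw [← hid t ht] at hgron
      refine le_trans hgron ?_
      have he : Real.exp (L * t) ≤ Real.exp (L * T) :=
        Real.exp_le_exp.mpr (mul_le_mul_of_nonneg_left ht.2 hL0)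
      have h1 : cc * t * Real.exp (L * t) ≤ cc * T * Real.exp (L * t) :=
        mul_le_mul_of_nonneg_right (mul_le_mul_of_nonneg_left ht.2 hcc0)
          (Real.exp_pos _).le
      have h2 : cc * T * Real.exp (L * t) ≤ cc * T * Real.exp (L * T) :=
        mul_le_mul_of_nonneg_left he (by positivity)
      linarith
    -- conclude via the coupling bound
    rw [hXrep t ht, hYrep t ht]
    refine W1_le_of_maps (ρ₀ i) (X t) (Y t) (hXm t ht) (hYm t ht) _ ?_
    intro x
    rw [← enorm_eq_nnnorm, ← ofReal_norm_eq_enorm]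
    exact ENNReal.ofReal_le_ofReal (hpt x)
  -- sum over the components
  have hsum : Wvec (fun i => ρ i t) (fun i => σ i t)
      ≤ (k : ℝ≥0∞) * ENNReal.ofReal (cc * T * Real.exp (L * T)) := by
    unfold Wvec
    calc (∑ i, W1 (ρ i t) (σ i t))
        ≤ ∑ _i : Fin k, ENNReal.ofReal (cc * T * Real.exp (L * T)) :=
          Finset.sum_le_sum fun i _ => hi i
      _ = (k : ℝ≥0∞) * ENNReal.ofReal (cc * T * Real.exp (L * T)) := by
          rw [Finset.sum_const, Finset.card_univ, Fintype.card_fin, nsmul_eq_mul]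
  refine le_trans hsum ?_
  have hk : (k : ℝ≥0∞) = ENNReal.ofReal (k : ℝ) := by
    rw [ENNReal.ofReal_natCast]
  rw [hk, ← ENNReal.ofReal_mul (Nat.cast_nonneg k)]
  have hfact : (k : ℝ) * (cc * T * Real.exp (L * T))
      = (k * c' * T * Real.exp (L * T)) * SWr := by
    rw [hccdef]; ring
  rw [hfact, ENNReal.ofReal_mul (by positivity), ENNReal.ofReal_toReal hSW]
  refine mul_le_mul_left (ENNReal.ofReal_le_ofReal ?_) SW
  have he : Real.exp (L * T) ≤ Real.exp (C * T) := by
    refine Real.exp_le_exp.mpr (mul_le_mul_of_nonneg_right ?_ hT)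
    rw [hCdef]
    have : 0 ≤ (k:ℝ) * c' := by positivity
    linarith
  have hkc : (k:ℝ) * c' ≤ C := by
    rw [hCdef]
    linarith [hL0]
  have h1 : (k:ℝ) * c' * T * Real.exp (L * T) ≤ C * T * Real.exp (L * T) := by
    refine mul_le_mul_of_nonneg_right (mul_le_mul_of_nonneg_right hkc hT) (Real.exp_pos _).le
  refine le_trans h1 ?_
  exact mul_le_mul_of_nonneg_left he (by positivity)
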